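/- Let E_4 be the two-dimensional complex evolution algebra with structural matrix ((0,1),(0,0)) (i.e. e₁e₁ = e₂, e₂e₂ = 0). A linear map P : ℂ² → ℂ² is a Rota–Baxter operator of weight 1 on E_4 if and only if there exist a, b ∈ ℂ with a ≠ −1/2 such that P has matrix ((a, b),(0, a²/(1+2a))); in particular there is no Rota–Baxter operator of weight 1 on E_4 whose matrix has (1,1)-entry equal to −1/2. -/

import Mathlib

/-- The evolution-algebra product on `ℂ²` determined by a structural matrix `A`:
`e_i · e_i = a_{i1} e₁ + a_{i2} e₂` and `e₁ · e₂ = e₂ · e₁ = 0`. -/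
noncomputable def evMulC (A : Matrix (Fin 2) (Fin 2) ℂ) (x y : Fin 2 → ℂ) : Fin 2 → ℂ :=
  fun k => x 0 * y 0 * A 0 k + x 1 * y 1 * A 1 k

/-- `P` is a Rota–Baxter operator of weight `lam` on the evolution algebra with structural
matrix `A`: `P(x)·P(y) = P(x·P(y) + P(x)·y + lam x·y)` for all `x, y`. -/
def IsRotaBaxter (A : Matrix (Fin 2) (Fin 2) ℂ) (lam : ℂ)
    (P : (Fin 2 → ℂ) →ₗ[ℂ] (Fin 2 → ℂ)) : Prop :=
  ∀ x y : Fin 2 → ℂ,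
    evMulC A (P x) (P y) = P (evMulC A x (P y) + evMulC A (P x) y + lam • evMulC A x y)

lemma ev4 (x y : Fin 2 → ℂ) : evMulC !![0,1;0,0] x y = ![0, x 0 * y 0] := by
  funext k; fin_cases k <;> simp [evMulC]

lemma Pexp' (P : (Fin 2 → ℂ) →ₗ[ℂ] (Fin 2 → ℂ)) (a b c d : ℂ)
    (h1 : P ![1,0] = ![a,b]) (h2 : P ![0,1] = ![c,d]) (x : Fin 2 → ℂ) :
    P x = ![x 0 * a + x 1 * c, x 0 * b + x 1 * d] := by
  have hx : x = x 0 • ![(1:ℂ),0] + x 1 • ![(0:ℂ),1] := by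
    funext k; fin_cases k <;> simp
  conv_lhs => rw [hx]
  rw [map_add, map_smul, map_smul, h1, h2]
  funext k; fin_cases k <;> simp [mul_comm]

lemma rb_iff (P : (Fin 2 → ℂ) →ₗ[ℂ] (Fin 2 → ℂ)) :
    IsRotaBaxter !![0, 1; 0, 0] 1 P ↔
      ∃ a b : ℂ, a ≠ -(1/2) ∧ P ![1, 0] = ![a, b] ∧ P ![0, 1] = ![0, a ^ 2 / (1 + 2 * a)] := by
  constructor
  · intro h
    set a := P ![1,0] 0 with ha'
    set b := P ![1,0] 1 with hb'
    set c := P ![0,1] 0 with hc'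
    set d := P ![0,1] 1 with hd'
    have h1 : P ![1,0] = ![a,b] := by funext k; fin_cases k <;> rfl
    have h2 : P ![0,1] = ![c,d] := by funext k; fin_cases k <;> rfl
    have hP := Pexp' P a b c d h1 h2
    unfold IsRotaBaxter at h
    simp only [ev4, hP, one_smul] at h
    have e2 := congrFun (h ![1,0] ![1,0]) 1
    have e3 := congrFun (h ![0,1] ![0,1]) 1
    simp [Pi.add_apply] at e2 e3
    have ha : a ≠ -(1/2) := by
      intro hh
      rw [hh] at e2
      norm_num at e2
    have hne : 1 + 2*a ≠ 0 := by
      intro hh; apply ha; linear_combination hh/2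
    refine ⟨a, b, ha, h1, ?_⟩
    rw [h2]
    have hd : d = a ^ 2 / (1 + 2*a) := by
      rw [eq_div_iff hne]; linear_combination -e2
    funext k; fin_cases k <;> simp [e3, hd]
  · rintro ⟨a, b, ha, h1, h2⟩
    have hP := Pexp' P a b 0 (a^2/(1+2*a)) h1 h2
    intro x y
    have hne : 1 + 2*a ≠ 0 := by
      intro hh; apply ha; linear_combination hh/2
    simp only [ev4, hP, one_smul]
    funext k; fin_cases k
    · simp
    · simp [Pi.add_apply]
      field_simp
      linear_combination (-(x 0 * a ^ 2 * y 0)) * mul_inv_cancel₀ hne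

/-- Rota–Baxter operators of weight 1 on `E₄` (`e₁e₁ = e₂`) are exactly those
with matrix `((a,b),(0, a²/(1+2a)))` for `a ≠ -1/2`; in particular no such operator has
`(1,1)`-entry equal to `-1/2`. -/
theorem rb_weight1_E4 (P : (Fin 2 → ℂ) →ₗ[ℂ] (Fin 2 → ℂ)) :
    (IsRotaBaxter !![0, 1; 0, 0] 1 P ↔
      ∃ a b : ℂ, a ≠ -(1/2) ∧ P ![1, 0] = ![a, b] ∧ P ![0, 1] = ![0, a ^ 2 / (1 + 2 * a)]) ∧
    (IsRotaBaxter !![0, 1; 0, 0] 1 P → (P ![1, 0]) 0 ≠ -(1/2)) := by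
  refine ⟨rb_iff P, fun h => ?_⟩
  obtain ⟨a, b, ha, h1, -⟩ := (rb_iff P).mp h
  rw [h1]
  simpa using ha
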